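/- arXiv:2207.04603 — 3 statements merged into one kernel-verified Lean document; each statement's English description precedes it below -/
import Mathlib

section
/- Let n ≥ 2, let |ψ_1⟩, ..., |ψ_{n−1}⟩ be unit vectors in C² such that for all i ≠ j, ⟨ψ_i|ψ_j⟩ ≠ 0 and ⟨ψ_i⊥|ψ_j⟩ ≠ 0, and ⟨0|ψ_i⟩ ≠ 0, ⟨1|ψ_i⟩ ≠ 0 for all i (where |ψ_i⊥⟩ is the unit vector orthogonal to |ψ_i⟩). Define the (2n−1)-qubit state |Ψ_1⟩ = |1⟩|ψ_1⟩···|ψ_{n−1}⟩|ψ_{n−1}⊥⟩···|ψ_1⊥⟩ and let |Ψ_k⟩ for k = 2,...,2n−1 be obtained from |Ψ_1⟩ by cyclically right-shifting the tensor factors k−1 times. Then the states |Ψ_1⟩, ..., |Ψ_{2n−1}⟩ are pairwise orthogonal. -/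
private lemma stmt12_aux (n N : ℕ) (hn : 2 ≤ n) (hNN : N = 2 * n - 1)
    (ψ ψp : ℕ → (Fin 2 → ℂ))
    (hperp : ∀ i, 1 ≤ i → i ≤ n - 1 → ∑ a, star (ψ i a) * ψp i a = 0)
    (F : ℕ → (Fin 2 → ℂ))
    (hF : ∀ i, 1 ≤ i → i ≤ n - 1 → F i = ψp i ∧ F (N - i) = ψ i)
    (Ψ : ℕ → ((Fin N → Fin 2) → ℂ))
    (hΨ : ∀ k g, Ψ k g = ∏ j : Fin N,
      F ((k - 1 + N - (j : ℕ)) % N) (g j)) :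
    ∀ k l, 1 ≤ k → k ≤ N → 1 ≤ l → l ≤ N → k ≠ l →
      ∑ g : Fin N → Fin 2, star (Ψ k g) * Ψ l g = 0 := by
  intro k l hk1 hkN hl1 hlN hkl
  have hNpos : 0 < N := by omega
  haveI : NeZero N := ⟨by omega⟩
  set d := k + N - l with hd
  set i := n * d % N with hi
  have hiN : i < N := Nat.mod_lt _ hNpos
  have hone : (2 * (n : ZMod N)) = 1 := by
    have h1 : (2 * n : ℕ) = N + 1 := by omega
    calc (2 * (n : ZMod N)) = ((2 * n : ℕ) : ZMod N) := by push_cast; ring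
    _ = ((N + 1 : ℕ) : ZMod N) := by rw [h1]
    _ = 1 := by push_cast [ZMod.natCast_self]; ring
  have hdc : ((d : ℕ) : ZMod N) = (k : ZMod N) - l := by
    rw [hd, Nat.cast_sub (by omega : l ≤ k + N)]
    push_cast [ZMod.natCast_self]; ring
  have hic : ((i : ℕ) : ZMod N) = (n : ZMod N) * ((k : ZMod N) - l) := by
    rw [hi, ZMod.natCast_mod, Nat.cast_mul, hdc]
  have h2i : (2 : ZMod N) * i = (k : ZMod N) - l := by
    rw [hic]; linear_combination ((k : ZMod N) - l) * hone
  have hi0 : 1 ≤ i := by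
    rcases Nat.eq_zero_or_pos i with h | h
    · exfalso
      rw [h] at h2i
      have hkl' : (k : ZMod N) = l := by push_cast at h2i; linear_combination -h2i
      have hmod := (ZMod.natCast_eq_natCast_iff k l N).mp hkl'
      have hdvd := (Nat.modEq_iff_dvd).mp hmod
      have hz : ((l : ℤ) - k) = 0 :=
        Int.eq_zero_of_abs_lt_dvd hdvd (by rw [abs_lt]; push_cast; omega)
      omega
    · exact h
  set c := k - 1 + N with hc
  set c' := l - 1 + N with hc'
  set j0 := (c - i) % N with hj0
  have hj0N : j0 < N := Nat.mod_lt _ hNpos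
  have hj0c : ((j0 : ℕ) : ZMod N) = (c : ZMod N) - i := by
    rw [hj0, ZMod.natCast_mod, Nat.cast_sub (by omega : i ≤ c)]
  set a := (c - j0) % N with ha
  set b := (c' - j0) % N with hb
  have haN : a < N := Nat.mod_lt _ hNpos
  have hbN : b < N := Nat.mod_lt _ hNpos
  have hac : ((a : ℕ) : ZMod N) = (i : ZMod N) := by
    rw [ha, ZMod.natCast_mod, Nat.cast_sub (by omega : j0 ≤ c), hj0c]; ring
  have hcc' : (c : ZMod N) = (c' : ZMod N) + k - l := by
    have h1 : c + l = c' + k := by omega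
    have h2 := congrArg (Nat.cast : ℕ → ZMod N) h1
    push_cast at h2
    linear_combination h2
  have hbc : ((b : ℕ) : ZMod N) = ((N - i : ℕ) : ZMod N) := by
    rw [hb, ZMod.natCast_mod, Nat.cast_sub (by omega : j0 ≤ c'), hj0c,
        Nat.cast_sub (le_of_lt hiN)]
    push_cast [ZMod.natCast_self]
    linear_combination h2i - hcc'
  have hai : a = i := by
    have h1 := congrArg ZMod.val hac
    rwa [ZMod.val_cast_of_lt haN, ZMod.val_cast_of_lt hiN] at h1
  have hbi : b = N - i := by
    have h1 := congrArg ZMod.val hbc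
    rwa [ZMod.val_cast_of_lt hbN, ZMod.val_cast_of_lt (by omega)] at h1
  have hfac : ∀ g : Fin N → Fin 2, star (Ψ k g) * Ψ l g
      = ∏ j : Fin N, (star (F ((k - 1 + N - (j : ℕ)) % N) (g j))
          * F ((l - 1 + N - (j : ℕ)) % N) (g j)) := by
    intro g
    rw [hΨ, hΨ, star_prod, ← Finset.prod_mul_distrib]
  calc (∑ g : Fin N → Fin 2, star (Ψ k g) * Ψ l g)
      = ∑ g ∈ Fintype.piFinset (fun _ : Fin N => (Finset.univ : Finset (Fin 2))),
          ∏ j : Fin N, (star (F ((k - 1 + N - (j : ℕ)) % N) (g j))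
            * F ((l - 1 + N - (j : ℕ)) % N) (g j)) := by
        rw [Fintype.piFinset_univ]
        exact Finset.sum_congr rfl fun g _ => hfac g
    _ = ∏ j : Fin N, ∑ x : Fin 2, star (F ((k - 1 + N - (j : ℕ)) % N) x)
          * F ((l - 1 + N - (j : ℕ)) % N) x :=
        by rw [Finset.prod_univ_sum]
    _ = 0 := by
        apply Finset.prod_eq_zero (Finset.mem_univ (⟨j0, hj0N⟩ : Fin N))
        show (∑ x : Fin 2, star (F a x) * F b x) = 0
        by_cases him : i ≤ n - 1
        · obtain ⟨hF1, hF2⟩ := hF i hi0 him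
          rw [hai, hbi, hF1, hF2]
          have hp := congrArg star (hperp i hi0 him)
          simpa [star_sum, star_mul, star_star, mul_comm] using hp
        · obtain ⟨m, hmeq⟩ : ∃ m, m = N - i := ⟨_, rfl⟩
          have him1 : 1 ≤ m := by omega
          have him2 : m ≤ n - 1 := by omega
          obtain ⟨hF1, hF2⟩ := hF m him1 him2
          have hbi' : b = m := by omega
          rw [hai, hbi', (by omega : i = N - m), hF2, hF1]
          exact hperp _ him1 him2

/-- The `2n−1` nonzero GenShifts states (cyclic shifts of
`|1⟩|ψ₁⟩⋯|ψ_{n−1}⟩|ψ_{n−1}⊥⟩⋯|ψ₁⊥⟩`) are pairwise orthogonal. States on `2n−1` qubits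
are represented as functions `(Fin (2n−1) → Fin 2) → ℂ`, a product state being the
product of its tensor factors; the `j`-th factor of `|Ψ_k⟩` is `F((k−1−j) mod (2n−1))`,
where `F 0 = |1⟩`, `F i = |ψ_i⊥⟩` and `F (2n−1−i) = |ψ_i⟩` for `1 ≤ i ≤ n−1`. -/
theorem stmt12 (n : ℕ) (hn : 2 ≤ n)
    (ψ ψp : ℕ → (Fin 2 → ℂ))
    (hψunit : ∀ i, 1 ≤ i → i ≤ n - 1 → ∑ a, star (ψ i a) * ψ i a = 1)
    (hψpunit : ∀ i, 1 ≤ i → i ≤ n - 1 → ∑ a, star (ψp i a) * ψp i a = 1)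
    (hperp : ∀ i, 1 ≤ i → i ≤ n - 1 → ∑ a, star (ψ i a) * ψp i a = 0)
    (hij : ∀ i j, 1 ≤ i → i ≤ n - 1 → 1 ≤ j → j ≤ n - 1 → i ≠ j →
      (∑ a, star (ψ i a) * ψ j a) ≠ 0 ∧ (∑ a, star (ψp i a) * ψ j a) ≠ 0)
    (h0 : ∀ i, 1 ≤ i → i ≤ n - 1 → ψ i 0 ≠ 0 ∧ ψ i 1 ≠ 0)
    (F : ℕ → (Fin 2 → ℂ))
    (hF0 : F 0 = ![0, 1])
    (hF : ∀ i, 1 ≤ i → i ≤ n - 1 → F i = ψp i ∧ F (2 * n - 1 - i) = ψ i)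
    (Ψ : ℕ → ((Fin (2 * n - 1) → Fin 2) → ℂ))
    (hΨ : ∀ k g, Ψ k g = ∏ j : Fin (2 * n - 1),
      F ((k - 1 + (2 * n - 1) - (j : ℕ)) % (2 * n - 1)) (g j)) :
    ∀ k l, 1 ≤ k → k ≤ 2 * n - 1 → 1 ≤ l → l ≤ 2 * n - 1 → k ≠ l →
      ∑ g : Fin (2 * n - 1) → Fin 2, star (Ψ k g) * Ψ l g = 0 :=
  stmt12_aux n (2 * n - 1) hn rfl ψ ψp hperp F hF Ψ hΨ
end

section
/- Under the hypotheses of the GenShifts construction (states |Ψ_1⟩,...,|Ψ_{2n−1}⟩ obtained by cyclic shifts of |1⟩|ψ_1⟩···|ψ_{n−1}⟩|ψ_{n−1}⊥⟩···|ψ_1⊥⟩, with all ⟨ψ_i|ψ_j⟩, ⟨ψ_i⊥|ψ_j⟩ nonzero for i≠j and all ⟨0|ψ_i⟩, ⟨1|ψ_i⟩ nonzero), for every pair j ≠ k there is exactly one party index i ∈ {1,...,2n−1} such that the i-th tensor factors of |Ψ_j⟩ and |Ψ_k⟩ are orthogonal. -/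
lemma aux_nz (x : Fin 2 → ℂ) (h : ∑ a, star (x a) * x a = 1) : x 0 ≠ 0 ∨ x 1 ≠ 0 := by
  by_contra hc
  push_neg at hc
  rw [Fin.sum_univ_two, hc.1, hc.2] at h
  simp at h

lemma inner_star (x y : Fin 2 → ℂ) :
    (∑ c, star (x c) * y c) = star (∑ c, star (y c) * x c) := by
  simp only [Fin.sum_univ_two, star_add, star_mul, star_star]
  try ring

lemma aux_det (x y z : Fin 2 → ℂ) (hz : z 0 ≠ 0 ∨ z 1 ≠ 0)
    (hx : star (x 0) * z 0 + star (x 1) * z 1 = 0)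
    (hy : star (y 0) * z 0 + star (y 1) * z 1 = 0) :
    x 0 * y 1 = x 1 * y 0 := by
  have hd : star (x 0) * star (y 1) - star (x 1) * star (y 0) = 0 := by
    rcases hz with h | h
    · have h1 : (star (x 0) * star (y 1) - star (x 1) * star (y 0)) * z 0 = 0 := by
        linear_combination star (y 1) * hx - star (x 1) * hy
      exact (mul_eq_zero.mp h1).resolve_right h
    · have h1 : (star (x 0) * star (y 1) - star (x 1) * star (y 0)) * z 1 = 0 := by
        linear_combination star (x 0) * hy - star (y 0) * hx
      exact (mul_eq_zero.mp h1).resolve_right h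
  have h2 := congrArg star hd
  simp only [star_sub, star_mul, star_star, star_zero] at h2
  linear_combination h2

lemma aux_par (x y z : Fin 2 → ℂ) (hx : x 0 ≠ 0 ∨ x 1 ≠ 0)
    (hpar : x 0 * y 1 = x 1 * y 0)
    (hzx : star (z 0) * x 0 + star (z 1) * x 1 = 0) :
    star (z 0) * y 0 + star (z 1) * y 1 = 0 := by
  rcases hx with h | h
  · have h1 : (star (z 0) * y 0 + star (z 1) * y 1) * x 0 = 0 := by
      linear_combination y 0 * hzx + star (z 1) * hpar
    exact (mul_eq_zero.mp h1).resolve_right h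
  · have h1 : (star (z 0) * y 0 + star (z 1) * y 1) * x 1 = 0 := by
      linear_combination y 1 * hzx - star (z 0) * hpar
    exact (mul_eq_zero.mp h1).resolve_right h

/-- In the GenShifts construction, for every pair `k ≠ l` of states there is exactly one
party `i` at which the local factors `F((k−1−i) mod (2n−1))` and `F((l−1−i) mod (2n−1))`
are orthogonal. -/
theorem stmt13 (n : ℕ) (hn : 2 ≤ n)
    (ψ ψp : ℕ → (Fin 2 → ℂ))
    (hψunit : ∀ i, 1 ≤ i → i ≤ n - 1 → ∑ a, star (ψ i a) * ψ i a = 1)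
    (hψpunit : ∀ i, 1 ≤ i → i ≤ n - 1 → ∑ a, star (ψp i a) * ψp i a = 1)
    (hperp : ∀ i, 1 ≤ i → i ≤ n - 1 → ∑ a, star (ψ i a) * ψp i a = 0)
    (hij : ∀ i j, 1 ≤ i → i ≤ n - 1 → 1 ≤ j → j ≤ n - 1 → i ≠ j →
      (∑ a, star (ψ i a) * ψ j a) ≠ 0 ∧ (∑ a, star (ψp i a) * ψ j a) ≠ 0)
    (h0 : ∀ i, 1 ≤ i → i ≤ n - 1 → ψ i 0 ≠ 0 ∧ ψ i 1 ≠ 0)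
    (F : ℕ → (Fin 2 → ℂ))
    (hF0 : F 0 = ![0, 1])
    (hF : ∀ i, 1 ≤ i → i ≤ n - 1 → F i = ψp i ∧ F (2 * n - 1 - i) = ψ i) :
    ∀ k l, 1 ≤ k → k ≤ 2 * n - 1 → 1 ≤ l → l ≤ 2 * n - 1 → k ≠ l →
      ∃! i : Fin (2 * n - 1),
        ∑ a, star (F ((k - 1 + (2 * n - 1) - (i : ℕ)) % (2 * n - 1)) a) *
          F ((l - 1 + (2 * n - 1) - (i : ℕ)) % (2 * n - 1)) a = 0 := by
  intro k l hk1 hk2 hl1 hl2 hkl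
  set m := 2 * n - 1 with hm
  have hm3 : 3 ≤ m := by omega
  have hψpne : ∀ i, 1 ≤ i → i ≤ n - 1 → ψp i 0 ≠ 0 ∨ ψp i 1 ≠ 0 :=
    fun i h1 h2 => aux_nz _ (hψpunit i h1 h2)
  have hψp1 : ∀ j, 1 ≤ j → j ≤ n - 1 → ψp j 1 ≠ 0 := by
    intro j h1 h2 hc
    have hp := hperp j h1 h2
    rw [Fin.sum_univ_two, hc, mul_zero, add_zero, mul_eq_zero] at hp
    rcases hp with h | h
    · exact (h0 j h1 h2).1 (by simpa using h)
    · have hu := hψpunit j h1 h2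
      rw [Fin.sum_univ_two, h, hc] at hu
      simp at hu
  have hψpψp : ∀ i j, 1 ≤ i → i ≤ n - 1 → 1 ≤ j → j ≤ n - 1 → i ≠ j →
      (∑ c, star (ψp i c) * ψp j c) ≠ 0 := by
    intro i j hi1 hi2 hj1 hj2 hne hc
    have hx := hperp j hj1 hj2
    rw [Fin.sum_univ_two] at hx hc
    have hd := aux_det (ψ j) (ψp i) (ψp j) (hψpne j hj1 hj2) hx hc
    have hpar : ψp i 0 * ψ j 1 = ψp i 1 * ψ j 0 := by linear_combination -hd
    have hz := hperp i hi1 hi2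
    rw [Fin.sum_univ_two] at hz
    have hres := aux_par (ψp i) (ψ j) (ψ i) (hψpne i hi1 hi2) hpar hz
    have hcontra := (hij i j hi1 hi2 hj1 hj2 hne).1
    rw [Fin.sum_univ_two] at hcontra
    exact hcontra hres
  have hψψp : ∀ i j, 1 ≤ i → i ≤ n - 1 → 1 ≤ j → j ≤ n - 1 → i ≠ j →
      (∑ c, star (ψ i c) * ψp j c) ≠ 0 := by
    intro i j hi1 hi2 hj1 hj2 hne hc
    rw [inner_star] at hc
    exact (hij j i hj1 hj2 hi1 hi2 (Ne.symm hne)).2 (star_eq_zero.mp hc)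
  have hFlow : ∀ j, 1 ≤ j → j ≤ n - 1 → F j = ψp j := fun j h1 h2 => (hF j h1 h2).1
  have hFhigh : ∀ j, n ≤ j → j ≤ m - 1 → F j = ψ (m - j) := by
    intro j h1 h2
    have e1 : 1 ≤ m - j := by omega
    have e2 : m - j ≤ n - 1 := by omega
    have h3 := (hF (m - j) e1 e2).2
    rwa [show m - (m - j) = j by omega] at h3
  have key : ∀ a b, a < m → b < m → a ≠ b →
      ((∑ c, star (F a c) * F b c) = 0 ↔ a + b = m) := by
    intro a b ha hb hab
    have hacase : a = 0 ∨ (1 ≤ a ∧ a ≤ n - 1) ∨ (n ≤ a ∧ a ≤ m - 1) := by omega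
    have hbcase : b = 0 ∨ (1 ≤ b ∧ b ≤ n - 1) ∨ (n ≤ b ∧ b ≤ m - 1) := by omega
    rcases hacase with ha0 | ⟨ha1, ha2⟩ | ⟨ha1, ha2⟩ <;>
      rcases hbcase with hb0 | ⟨hb1, hb2⟩ | ⟨hb1, hb2⟩
    · exact absurd (ha0.trans hb0.symm) hab
    · subst ha0
      rw [hF0, hFlow b hb1 hb2]
      refine iff_of_false (fun h => hψp1 b hb1 hb2 ?_) (by omega)
      simpa [Fin.sum_univ_two] using h
    · subst ha0
      rw [hF0, hFhigh b hb1 hb2]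
      refine iff_of_false (fun h => (h0 (m - b) (by omega) (by omega)).2 ?_) (by omega)
      simpa [Fin.sum_univ_two] using h
    · subst hb0
      rw [hF0, hFlow a ha1 ha2]
      refine iff_of_false (fun h => hψp1 a ha1 ha2 ?_) (by omega)
      simpa [Fin.sum_univ_two, star_eq_zero] using h
    · rw [hFlow a ha1 ha2, hFlow b hb1 hb2]
      exact iff_of_false (hψpψp a b ha1 ha2 hb1 hb2 hab) (by omega)
    · rw [hFlow a ha1 ha2, hFhigh b hb1 hb2]
      by_cases hj : a = m - b
      · have hs : (∑ c, star (ψp a c) * ψ (m - b) c) = 0 := by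
          rw [← hj, inner_star, hperp a ha1 ha2, star_zero]
        exact iff_of_true hs (by omega)
      · exact iff_of_false ((hij a (m - b) ha1 ha2 (by omega) (by omega) hj).2) (by omega)
    · subst hb0
      rw [hF0, hFhigh a ha1 ha2]
      refine iff_of_false (fun h => (h0 (m - a) (by omega) (by omega)).2 ?_) (by omega)
      simpa [Fin.sum_univ_two, star_eq_zero] using h
    · rw [hFhigh a ha1 ha2, hFlow b hb1 hb2]
      by_cases hj : m - a = b
      · rw [hj]
        exact iff_of_true (hperp b hb1 hb2) (by omega)
      · exact iff_of_false (hψψp (m - a) b (by omega) (by omega) hb1 hb2 hj) (by omega)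
    · rw [hFhigh a ha1 ha2, hFhigh b hb1 hb2]
      exact iff_of_false
        ((hij (m - a) (m - b) (by omega) (by omega) (by omega) (by omega) (by omega)).1)
        (by omega)
  have hmod : ∀ x : ℕ, 1 ≤ x → x ≤ m → ∀ i : Fin m,
      (x - 1 + m - (i : ℕ)) % m =
        if (i : ℕ) ≤ x - 1 then x - 1 - (i : ℕ) else x - 1 + m - (i : ℕ) := by
    intro x hx1 hx2 i
    have hi := i.isLt
    split_ifs with h
    · rw [show x - 1 + m - (i : ℕ) = (x - 1 - (i : ℕ)) + m by omega, Nat.add_mod_right,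
        Nat.mod_eq_of_lt (by omega)]
    · exact Nat.mod_eq_of_lt (by omega)
  have hiff : ∀ i : Fin m,
      ((∑ a, star (F ((k - 1 + m - (i : ℕ)) % m) a) * F ((l - 1 + m - (i : ℕ)) % m) a) = 0
        ↔ (2 * (i : ℕ) = k + l - 2 ∨ 2 * (i : ℕ) = k + l - 2 + m ∨
            2 * (i : ℕ) + m = k + l - 2)) := by
    intro i
    have hi := i.isLt
    have hka := hmod k hk1 hk2 i
    have hla := hmod l hl1 hl2 i
    have hne : (k - 1 + m - (i : ℕ)) % m ≠ (l - 1 + m - (i : ℕ)) % m := by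
      rw [hka, hla]; split_ifs <;> omega
    rw [key _ _ (Nat.mod_lt _ (by omega)) (Nat.mod_lt _ (by omega)) hne, hka, hla]
    split_ifs <;> omega
  obtain ⟨i0, hlt, hdis⟩ : ∃ i0, i0 < m ∧
      (2 * i0 = k + l - 2 ∨ 2 * i0 = k + l - 2 + m ∨ 2 * i0 + m = k + l - 2) := by
    refine ⟨if (k + l - 2) % 2 = 0 then (k + l - 2) / 2
      else if k + l - 2 < m then (k + l - 2 + m) / 2 else (k + l - 2 - m) / 2, ?_, ?_⟩ <;>
      split_ifs <;> omega
  refine ⟨⟨i0, hlt⟩, (hiff _).mpr hdis, ?_⟩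
  intro y hy
  have hy' := (hiff y).mp hy
  have hylt := y.isLt
  apply Fin.ext
  show (y : ℕ) = i0
  omega
end

section
/- Let N = 2n−1 with n ≥ 3. Let S be the set of N cyclic shifts (as N-tuples of indices in Z_N) of the tuple (0, N−1, N−2, ..., 2, 1), where the tuple indexed by shift s has i-th coordinate equal to (s − i) mod N for appropriate indexing. Then for any subset T of shifts with |T| ≥ n+2, for every coordinate position i ∈ {1,...,N} there exist at least two pairs of elements of T whose i-th coordinates x, y satisfy x + y ≡ 0 (mod N) with x, y ≠ 0. -/
/-- Any `n+2` of the `2n−1` cyclic shift states (indexed by shifts `s ∈ Z_N`, `N = 2n−1`,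
the `i`-th coordinate of shift `s` being `s − i mod N`) retain, at every coordinate `i`,
at least two distinct pairs of elements whose coordinates are nonzero and sum to `0 mod N`. -/
theorem stmt14 (n : ℕ) (hn : 3 ≤ n) (T : Finset (ZMod (2 * n - 1)))
    (hT : n + 2 ≤ T.card) :
    ∀ i : ZMod (2 * n - 1), ∃ s₁ t₁ s₂ t₂ : ZMod (2 * n - 1),
      s₁ ∈ T ∧ t₁ ∈ T ∧ s₂ ∈ T ∧ t₂ ∈ T ∧
      (s₁ - i) + (t₁ - i) = 0 ∧ s₁ - i ≠ 0 ∧ t₁ - i ≠ 0 ∧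
      (s₂ - i) + (t₂ - i) = 0 ∧ s₂ - i ≠ 0 ∧ t₂ - i ≠ 0 ∧
      ({s₁, t₁} : Finset (ZMod (2 * n - 1))) ≠ {s₂, t₂} := by
  intro i
  haveI : NeZero (2 * n - 1) := ⟨by omega⟩
  have hcard : Fintype.card (ZMod (2 * n - 1)) = 2 * n - 1 := ZMod.card _
  set T' : Finset (ZMod (2 * n - 1)) := T.image (fun x => x - i) with hT'
  have hT'card : T'.card = T.card := Finset.card_image_of_injective _
    (fun a b h => by simpa using sub_left_injective h)
  set C : Finset (ZMod (2 * n - 1)) := T' \ {0} with hC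
  have hCcard : n + 1 ≤ C.card := by
    have h1 := Finset.le_card_sdiff ({0} : Finset (ZMod (2 * n - 1))) T'
    rw [← hC, Finset.card_singleton] at h1
    omega
  set D : Finset (ZMod (2 * n - 1)) := C.image (fun x => -x) with hD
  have hDcard : D.card = C.card := Finset.card_image_of_injective _ neg_injective
  set B : Finset (ZMod (2 * n - 1)) := C ∩ D with hB
  have hunion : (C ∪ D).card ≤ 2 * n - 2 := by
    have hsub : C ∪ D ⊆ ({0} : Finset (ZMod (2 * n - 1)))ᶜ := by
      intro x hx
      rcases Finset.mem_union.1 hx with h | h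
      · simp only [hC, Finset.mem_sdiff, Finset.mem_singleton] at h
        simp [h.2]
      · simp only [hD, Finset.mem_image] at h
        obtain ⟨c, hc, rfl⟩ := h
        simp only [hC, Finset.mem_sdiff, Finset.mem_singleton] at hc
        simp [hc.2]
    have h2 := Finset.card_le_card hsub
    rw [Finset.card_compl, Finset.card_singleton, hcard] at h2
    omega
  have hBcard : 4 ≤ B.card := by
    have h3 := Finset.card_union_add_card_inter C D
    rw [← hB] at h3
    omega
  obtain ⟨x, hx⟩ : B.Nonempty := Finset.card_pos.1 (by omega)
  have hpair : ({x, -x} : Finset (ZMod (2 * n - 1))).card ≤ 2 := by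
    apply le_trans (Finset.card_insert_le _ _); simp
  obtain ⟨y, hy⟩ : (B \ ({x, -x} : Finset (ZMod (2 * n - 1)))).Nonempty := by
    apply Finset.card_pos.1
    have h4 := Finset.le_card_sdiff ({x, -x} : Finset (ZMod (2 * n - 1))) B
    omega
  have hyB : y ∈ B := (Finset.mem_sdiff.1 hy).1
  have hynot : y ∉ ({x, -x} : Finset (ZMod (2 * n - 1))) := (Finset.mem_sdiff.1 hy).2
  have unpack : ∀ z ∈ B, ∃ s t : ZMod (2 * n - 1),
      s ∈ T ∧ t ∈ T ∧ s - i = z ∧ t - i = -z ∧ z ≠ 0 := by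
    intro z hz
    obtain ⟨hzC, hzD⟩ := Finset.mem_inter.1 hz
    simp only [hC, Finset.mem_sdiff, Finset.mem_singleton] at hzC
    obtain ⟨s, hs, hsz⟩ := Finset.mem_image.1 hzC.1
    simp only [hD, Finset.mem_image] at hzD
    obtain ⟨c, hcC, hcz⟩ := hzD
    simp only [hC, Finset.mem_sdiff, Finset.mem_singleton] at hcC
    obtain ⟨t, ht, htc⟩ := Finset.mem_image.1 hcC.1
    exact ⟨s, t, hs, ht, hsz, by rw [htc, ← hcz, neg_neg], hzC.2⟩
  obtain ⟨s₁, t₁, hs₁, ht₁, hsx, htx, hx0⟩ := unpack x hx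
  obtain ⟨s₂, t₂, hs₂, ht₂, hsy, hty, hy0⟩ := unpack y hyB
  refine ⟨s₁, t₁, s₂, t₂, hs₁, ht₁, hs₂, ht₂, by rw [hsx, htx]; ring,
    by rw [hsx]; exact hx0, by rw [htx]; simpa using hx0,
    by rw [hsy, hty]; ring, by rw [hsy]; exact hy0, by rw [hty]; simpa using hy0, ?_⟩
  intro heq
  have hs₂mem : s₂ ∈ ({s₁, t₁} : Finset (ZMod (2 * n - 1))) := heq ▸ Finset.mem_insert_self _ _
  apply hynot
  rcases Finset.mem_insert.1 hs₂mem with h | h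
  · rw [← hsy, h, hsx]; simp
  · rw [← hsy, Finset.mem_singleton.1 h, htx]; simp
end
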